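/- For any nonzero integer a and any integer n ≥ 2, E_{2n,a} ≡ a·(2a-1)^{-1} + 8a^3 n^3 + 12a^3 n^2 + (2a^3 + 8a^2) n (mod 32), where (2a-1)^{-1} denotes the inverse of 2a-1 modulo 32. -/
import Mathlib

open Finset

def EZ (a : ℤ) : ℕ → ℤ
  | 0 => 1
  | n + 1 =>
      -a * ∑ k ∈ (Finset.Icc 1 ((n + 1) / 2)).attach,
        ((n + 1).choose (2 * k.1) : ℤ) * EZ a (n + 1 - 2 * k.1)
  decreasing_by
    have h := Finset.mem_Icc.mp k.2
    omega

lemma EZ_succ (a : ℤ) (n : ℕ) : EZ a (n+1) =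
    -a * ∑ k ∈ Icc 1 ((n+1)/2), ((n+1).choose (2*k) : ℤ) * EZ a (n+1-2*k) := by
  rw [EZ, Finset.sum_attach _ (fun k => ((n+1).choose (2*k) : ℤ) * EZ a (n+1-2*k))]

lemma EZ_two (a : ℤ) : EZ a 2 = -a := by
  have := EZ_succ a 1
  norm_num [show (2:ℕ)/2 = 1 from rfl] at this
  simpa [EZ] using this

lemma EZ_four (a : ℤ) : EZ a 4 = 6*a^2 - a := by
  have := EZ_succ a 3
  norm_num [show (4:ℕ)/2 = 2 from rfl, Finset.sum_Icc_succ_top, EZ_two] at this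
  rw [this]; simp [EZ, Nat.choose]; ring

lemma EZ_six (a : ℤ) : EZ a 6 = -90*a^3 + 30*a^2 - a := by
  have := EZ_succ a 5
  norm_num [show (6:ℕ)/2 = 3 from rfl, Finset.sum_Icc_succ_top, EZ_two, EZ_four] at this
  rw [this]; simp [EZ, Nat.choose]; ring

lemma EZ_eight (a : ℤ) : EZ a 8 = 2520*a^4 - 1260*a^3 + 126*a^2 - a := by
  have := EZ_succ a 7
  norm_num [show (8:ℕ)/2 = 4 from rfl, Finset.sum_Icc_succ_top, EZ_two, EZ_four, EZ_six] at this
  rw [this]; simp [EZ, Nat.choose]; ring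

lemma EZ_even (a : ℤ) (n : ℕ) (hn : 1 ≤ n) :
    EZ a (2*n) = -a * ∑ m ∈ range n, ((2*n).choose (2*m) : ℤ) * EZ a (2*m) := by
  obtain ⟨p, rfl⟩ : ∃ p, n = p + 1 := ⟨n-1, by omega⟩
  rw [show 2*(p+1) = (2*p+1)+1 by ring, EZ_succ, show (2*p+1+1)/2 = p+1 by omega]
  rw [show 2*p+1+1 = 2*(p+1) by ring]
  congr 1
  apply Finset.sum_nbij' (i := fun k => p+1-k) (j := fun m => p+1-m)
  · intro k hk; have := Finset.mem_Icc.mp hk; simp only [Finset.mem_range]; omega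
  · intro m hm; have := Finset.mem_range.mp hm; simp only [Finset.mem_Icc]; omega
  · intro k hk; have := Finset.mem_Icc.mp hk; omega
  · intro m hm; have := Finset.mem_range.mp hm; omega
  · intro k hk
    have hk' := Finset.mem_Icc.mp hk
    have h1 : 2*(p+1) - 2*k = 2*(p+1-k) := by omega
    have h2 : (2*(p+1)).choose (2*(p+1-k)) = (2*(p+1)).choose (2*k) := by
      rw [show 2*(p+1-k) = 2*(p+1) - 2*k by omega]
      exact Nat.choose_symm (by omega)
    rw [h1, h2]

lemma pascal_sum (N : ℕ) (g : ℕ → ℤ) :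
    ∑ i ∈ range (N+2), ((N+1).choose i : ℤ) * g i
      = ∑ i ∈ range (N+1), (N.choose i : ℤ) * g i
        + ∑ i ∈ range (N+1), (N.choose i : ℤ) * g (i+1) := by
  have h1 : ∑ i ∈ range (N+2), ((N+1).choose i : ℤ) * g i
      = (∑ i ∈ range (N+1), ((N+1).choose (i+1) : ℤ) * g (i+1)) + ((N+1).choose 0 : ℤ) * g 0 :=
    Finset.sum_range_succ' _ (N+1)
  have h2 : ∑ i ∈ range (N+2), (N.choose i : ℤ) * g i
      = (∑ i ∈ range (N+1), (N.choose (i+1) : ℤ) * g (i+1)) + (N.choose 0 : ℤ) * g 0 :=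
    Finset.sum_range_succ' _ (N+1)
  have h3 : ∑ i ∈ range (N+2), (N.choose i : ℤ) * g i
      = (∑ i ∈ range (N+1), (N.choose i : ℤ) * g i) + (N.choose (N+1) : ℤ) * g (N+1) :=
    Finset.sum_range_succ _ (N+1)
  have h5 : ∑ i ∈ range (N+1), ((N+1).choose (i+1) : ℤ) * g (i+1)
      = ∑ i ∈ range (N+1), ((N.choose i : ℤ) * g (i+1) + (N.choose (i+1) : ℤ) * g (i+1)) := by
    apply Finset.sum_congr rfl; intro i _; rw [Nat.choose_succ_succ]; push_cast; ring
  rw [h1, h5, Finset.sum_add_distrib]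
  have h6 := h2.symm.trans h3
  simp only [Nat.choose_succ_self, Nat.cast_zero, zero_mul, add_zero, Nat.choose_zero_right,
    Nat.cast_one, one_mul] at h6 ⊢
  linarith

lemma ff_shift (y : ℤ) (s : ℕ) :
    (∏ t ∈ range (s+1), (y + 1 - (t:ℤ))) =
      (∏ t ∈ range (s+1), (y - t)) + (s+1) * ∏ t ∈ range s, (y - t) := by
  rw [Finset.prod_range_succ' (fun t => y + 1 - (t:ℤ)), Finset.prod_range_succ]
  have : ∀ t ∈ range s, (y + 1 - ((t+1:ℕ):ℤ)) = y - t := by intro t _; push_cast; ring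
  rw [Finset.prod_congr rfl this]; push_cast; ring

lemma keyL (x : ℤ) : ∀ N r : ℕ, r ≤ N →
    ∑ i ∈ range (N+1), (N.choose i : ℤ) * (x^i * ∏ t ∈ range r, ((i:ℤ) - t))
      = (∏ t ∈ range r, ((N:ℤ) - t)) * (x^r * (1+x)^(N-r)) := by
  intro N
  induction N with
  | zero => intro r hr; interval_cases r; simp
  | succ N ih =>
    intro r hr
    rcases Nat.lt_or_ge r (N+1) with h | h
    · have hrN : r ≤ N := by omega
      have hp := pascal_sum N (fun i => x^i * ∏ t ∈ range r, ((i:ℤ) - t))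
      rw [show N+1+1 = N+2 from rfl] at hp
      rw [hp, ih r hrN]
      rcases r with _ | s
      · simp only [Finset.range_zero, Finset.prod_empty, mul_one, pow_zero, one_mul]
        have e0 : ∑ i ∈ range (N+1), (N.choose i : ℤ) * x^(i+1)
            = x * ∑ i ∈ range (N+1), (N.choose i : ℤ) * (x^i * ∏ t ∈ range 0, ((i:ℤ) - t)) := by
          rw [Finset.mul_sum]; apply Finset.sum_congr rfl; intro i _; simp; ring
        rw [e0, ih 0 (by omega)]
        simp only [Finset.range_zero, Finset.prod_empty, pow_zero, one_mul, Nat.sub_zero]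
        rw [pow_succ]
        ring
      · have hsN : s ≤ N := by omega
        have e1 : ∑ i ∈ range (N+1), (N.choose i : ℤ) * (x^(i+1) * ∏ t ∈ range (s+1), (((i+1:ℕ):ℤ) - t))
            = x * (∑ i ∈ range (N+1), (N.choose i : ℤ) * (x^i * ∏ t ∈ range (s+1), ((i:ℤ) - t)))
              + ((s:ℤ)+1) * x * (∑ i ∈ range (N+1), (N.choose i : ℤ) * (x^i * ∏ t ∈ range s, ((i:ℤ) - t))) := by
          rw [Finset.mul_sum, Finset.mul_sum, ← Finset.sum_add_distrib]
          apply Finset.sum_congr rfl; intro i _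
          have hff := ff_shift (i:ℤ) s
          have : (∏ t ∈ range (s+1), (((i+1:ℕ):ℤ) - t)) = ∏ t ∈ range (s+1), ((i:ℤ) + 1 - t) := by
            push_cast; rfl
          rw [this, hff]; try push_cast; try ring
        rw [e1, ih (s+1) hrN, ih s hsN]
        have hprodN : (∏ t ∈ range (s+1), (((N+1:ℕ):ℤ) - t))
            = (∏ t ∈ range (s+1), ((N:ℤ) - t)) + ((s:ℤ)+1) * ∏ t ∈ range s, ((N:ℤ) - t) := by
          have hff := ff_shift (N:ℤ) s
          have : (∏ t ∈ range (s+1), (((N+1:ℕ):ℤ) - t)) = ∏ t ∈ range (s+1), ((N:ℤ) + 1 - t) := by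
            push_cast; rfl
          rw [this, hff]; try push_cast; try ring
        rw [hprodN, Finset.prod_range_succ]
        rw [show N+1-(s+1) = (N-(s+1))+1 by omega, show N-s = (N-(s+1))+1 by omega, pow_succ]
        have hNs : ((N:ℤ) - s) = ((N - (s+1) : ℕ) : ℤ) + 1 := by omega
        rw [hNs]
        ring
    · have hrw : r = N + 1 := by omega
      subst hrw
      rw [Finset.sum_range_succ]
      have hz : ∀ i ∈ range (N+1), (N+1).choose i * ((x:ℤ)^i * ∏ t ∈ range (N+1+1-1), ((i:ℤ) - t)) = 0 := by
        intro i hi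
        have : (∏ t ∈ range (N+1), ((i:ℤ) - t)) = 0 := by
          apply Finset.prod_eq_zero (Finset.mem_range.mpr (Finset.mem_range.mp hi))
          simp
        simp [this]
      rw [Finset.sum_eq_zero (by simpa using hz)]
      simp [Nat.choose_self]
      ring

lemma even_sum (f : ℕ → ℤ) (hf : ∀ m, f (2*m+1) = 0) :
    ∀ n, ∑ i ∈ range (2*n+1), f i = ∑ m ∈ range (n+1), f (2*m) := by
  intro n; induction n with
  | zero => simp
  | succ n ih =>
      have h1 : 2*(n+1)+1 = ((2*n+1)+1)+1 := by ring
      rw [h1, Finset.sum_range_succ, Finset.sum_range_succ, ih,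
        Finset.sum_range_succ (fun m => f (2*m)) (n+1)]
      rw [hf n, show 2*n+1+1 = 2*(n+1) by ring]
      ring

lemma even_ff_sum (n r : ℕ) (h : r + 1 ≤ 2*n) :
    2 * ∑ m ∈ range (n+1), ((2*n).choose (2*m) : ℤ) * ∏ t ∈ range r, (2*(m:ℤ) - (t:ℤ))
      = (∏ t ∈ range r, (((2*n:ℕ):ℤ) - (t:ℤ))) * 2^(2*n - r) := by
  set N := 2*n with hN
  have hr : r ≤ N := by omega
  set f : ℕ → ℤ := fun i => (N.choose i : ℤ) * (((1:ℤ)^i + (-1:ℤ)^i) * ∏ t ∈ range r, ((i:ℤ) - t)) with hfdef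
  have hf : ∀ m, f (2*m+1) = 0 := by
    intro m
    have hodd : ((-1:ℤ))^(2*m+1) = -1 := Odd.neg_one_pow ⟨m, by ring⟩
    simp only [hfdef, hodd, one_pow]
    ring
  have step1 : 2 * ∑ m ∈ range (n+1), ((2*n).choose (2*m) : ℤ) * ∏ t ∈ range r, (2*(m:ℤ) - (t:ℤ))
      = ∑ m ∈ range (n+1), f (2*m) := by
    rw [Finset.mul_sum]
    apply Finset.sum_congr rfl; intro m _
    have heven : ((-1:ℤ))^(2*m) = 1 := Even.neg_one_pow ⟨m, by ring⟩
    have hprod : (∏ t ∈ range r, (((2*m:ℕ):ℤ) - (t:ℤ))) = ∏ t ∈ range r, (2*(m:ℤ) - (t:ℤ)) := by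
      push_cast; rfl
    simp only [hfdef, heven, one_pow, hN, hprod]
    ring
  have step2 : ∑ i ∈ range (N+1), f i
      = (∑ i ∈ range (N+1), (N.choose i : ℤ) * ((1:ℤ)^i * ∏ t ∈ range r, ((i:ℤ) - t)))
        + (∑ i ∈ range (N+1), (N.choose i : ℤ) * ((-1:ℤ)^i * ∏ t ∈ range r, ((i:ℤ) - t))) := by
    rw [← Finset.sum_add_distrib]
    apply Finset.sum_congr rfl; intro i _
    simp only [hfdef]; ring
  have h1 := keyL 1 N r hr
  have h2 := keyL (-1) N r hr
  have hzero : ((1:ℤ) + -1)^(N-r) = 0 := by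
    rw [show (1:ℤ) + -1 = 0 by ring]
    exact zero_pow (by omega)
  rw [step1, ← even_sum f hf n, show 2*n+1 = N+1 by omega, step2, h1, h2, hzero]
  rw [show (1:ℤ)+1 = 2 by ring]
  simp

lemma sum_zero_mod (n r : ℕ) (hn : 5 ≤ n) (hr : r ≤ 3) :
    ((∑ m ∈ range (n+1), ((2*n).choose (2*m) : ℤ) * ∏ t ∈ range r, (2*(m:ℤ) - (t:ℤ)) : ℤ) : ZMod 32) = 0 := by
  have h := even_ff_sum n r (by omega)
  set X := ∑ m ∈ range (n+1), ((2*n).choose (2*m) : ℤ) * ∏ t ∈ range r, (2*(m:ℤ) - (t:ℤ)) with hX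
  set P := ∏ t ∈ range r, (((2*n:ℕ):ℤ) - (t:ℤ)) with hP
  rw [show 2*n - r = (2*n - r - 1) + 1 by omega, pow_succ] at h
  have hX2 : X = P * 2^(2*n - r - 1) := by
    apply mul_left_cancel₀ (a := (2:ℤ)) two_ne_zero
    rw [h]; ring
  have hdvd : (32:ℤ) ∣ X := by
    rw [hX2, show 2*n - r - 1 = 5 + (2*n - r - 6) by omega, pow_add]
    exact ⟨P * 2^(2*n - r - 6), by ring⟩
  exact (ZMod.intCast_zmod_eq_zero_iff_dvd X 32).mpr hdvd

lemma hB : ∀ A : ZMod 32, (2*A-1) * (2*A-1)^7 = 1 := by decide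

lemma poly2 : ∀ A : ZMod 32, 6*A^2 - A
    = A*(2*A-1)^7 + 8*A^3*2^3 + 12*A^3*2^2 + (2*A^3+8*A^2)*2 := by decide

lemma poly3 : ∀ A : ZMod 32, -90*A^3 + 30*A^2 - A
    = A*(2*A-1)^7 + 8*A^3*3^3 + 12*A^3*3^2 + (2*A^3+8*A^2)*3 := by decide

lemma poly4 : ∀ A : ZMod 32, 2520*A^4 - 1260*A^3 + 126*A^2 - A
    = A*(2*A-1)^7 + 8*A^3*4^3 + 12*A^3*4^2 + (2*A^3+8*A^2)*4 := by decide

lemma final_id : ∀ A M : ZMod 32,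
    -A*(1 + (M*(2*M-1))*(-A) + (-(A*(2*A-1)^7) - (M*(2*M-1))*(A*(2*A-1)^7 + 22*A^3+8*A^2)
      - (A*(2*A-1)^7 + 8*A^3*M^3+12*A^3*M^2+(2*A^3+8*A^2)*M)))
    = A*(2*A-1)^7 + 8*A^3*M^3+12*A^3*M^2+(2*A^3+8*A^2)*M := by decide

lemma main_cong (a : ℤ) : ∀ n : ℕ, 2 ≤ n →
    ((EZ a (2*n) : ℤ) : ZMod 32) =
      (a:ZMod 32)*(2*(a:ZMod 32)-1)^7 + 8*(a:ZMod 32)^3*(n:ZMod 32)^3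
        + 12*(a:ZMod 32)^3*(n:ZMod 32)^2 + (2*(a:ZMod 32)^3+8*(a:ZMod 32)^2)*(n:ZMod 32) := by
  intro n
  induction n using Nat.strong_induction_on with
  | _ n ih =>
    intro hn
    set A : ZMod 32 := (a : ZMod 32) with hA
    rcases Nat.lt_or_ge n 5 with h5 | h5
    · interval_cases n
      · rw [show 2*2 = 4 from rfl, EZ_four]
        push_cast
        exact poly2 A
      · rw [show 2*3 = 6 from rfl, EZ_six]
        push_cast
        exact poly3 A
      · rw [show 2*4 = 8 from rfl, EZ_eight]
        push_cast
        exact poly4 A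
    · -- inductive step
      set M : ZMod 32 := (n : ZMod 32) with hM
      set B : ZMod 32 := (2*A-1)^7 with hBdef
      have h1 : ((EZ a (2*n) : ℤ) : ZMod 32)
          = -A * ∑ m ∈ range n, ((2*n).choose (2*m) : ZMod 32) * ((EZ a (2*m) : ℤ) : ZMod 32) := by
        rw [EZ_even a n (by omega)]
        push_cast
        ring
      set G : ℕ → ZMod 32 := fun m => A*B + 8*A^3*(m:ZMod 32)^3 + 12*A^3*(m:ZMod 32)^2
        + (2*A^3+8*A^2)*(m:ZMod 32) with hG
      set g : ℕ → ZMod 32 := fun m => ((2*n).choose (2*m) : ZMod 32) * G m with hg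
      have hsplit : range n = insert 0 (insert 1 (Ico 2 n)) := by
        ext x; simp only [Finset.mem_range, Finset.mem_insert, Finset.mem_Ico]; omega
      have hd1 : (0:ℕ) ∉ insert 1 (Ico 2 n) := by simp
      have hd2 : (1:ℕ) ∉ Ico 2 n := by simp
      -- the vanishing full sum
      have hc : ∀ r, r ≤ 3 →
          ∑ m ∈ range (n+1), ((2*n).choose (2*m) : ZMod 32) * ∏ t ∈ range r, (2*(m:ZMod 32) - (t:ZMod 32)) = 0 := by
        intro r hr
        have h0 := sum_zero_mod n r h5 hr
        rw [← h0]
        push_cast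
        rfl
      have hGm : ∀ m : ℕ, g m
          = A*B * (((2*n).choose (2*m) : ZMod 32) * ∏ t ∈ range 0, (2*(m:ZMod 32) - (t:ZMod 32)))
            + A^3 * (((2*n).choose (2*m) : ZMod 32) * ∏ t ∈ range 3, (2*(m:ZMod 32) - (t:ZMod 32)))
            + 6*A^3 * (((2*n).choose (2*m) : ZMod 32) * ∏ t ∈ range 2, (2*(m:ZMod 32) - (t:ZMod 32)))
            + (5*A^3+4*A^2) * (((2*n).choose (2*m) : ZMod 32) * ∏ t ∈ range 1, (2*(m:ZMod 32) - (t:ZMod 32))) := by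
        intro m
        simp only [hg, hG, Finset.prod_range_succ, Finset.prod_range_zero]
        push_cast
        ring
      have hg0 : ∑ m ∈ range (n+1), g m = 0 := by
        rw [Finset.sum_congr rfl (fun m _ => hGm m)]
        rw [Finset.sum_add_distrib, Finset.sum_add_distrib, Finset.sum_add_distrib,
          ← Finset.mul_sum, ← Finset.mul_sum, ← Finset.mul_sum, ← Finset.mul_sum]
        rw [hc 0 (by omega), hc 3 (by omega), hc 2 (by omega), hc 1 (by omega)]
        ring
      have hIco : ∑ m ∈ Ico 2 n, g m = -(g 0) - g 1 - g n := by
        have e1 : ∑ m ∈ range (n+1), g m = (∑ m ∈ range n, g m) + g n := Finset.sum_range_succ g n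
        have e2 : ∑ m ∈ range n, g m = g 0 + (g 1 + ∑ m ∈ Ico 2 n, g m) := by
          rw [hsplit, Finset.sum_insert hd1, Finset.sum_insert hd2]
        rw [e1, e2] at hg0
        linear_combination hg0
      have hEZ0 : ((2*n).choose (2*0) : ZMod 32) * ((EZ a (2*0) : ℤ) : ZMod 32) = 1 := by
        norm_num [show EZ a 0 = 1 by simp [EZ]]
      have hEZ1 : ((2*n).choose (2*1) : ZMod 32) * ((EZ a (2*1) : ℤ) : ZMod 32)
          = ((2*n).choose 2 : ZMod 32) * (-A) := by
        rw [show (2:ℕ)*1 = 2 from rfl, EZ_two]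
        push_cast
        ring
      have hmid : ∑ m ∈ Ico 2 n, ((2*n).choose (2*m) : ZMod 32) * ((EZ a (2*m) : ℤ) : ZMod 32)
          = ∑ m ∈ Ico 2 n, g m := by
        apply Finset.sum_congr rfl
        intro m hm
        have hm' := Finset.mem_Ico.mp hm
        rw [ih m hm'.2 hm'.1]
      have hEZsum : ∑ m ∈ range n, ((2*n).choose (2*m) : ZMod 32) * ((EZ a (2*m) : ℤ) : ZMod 32)
          = 1 + ((2*n).choose 2 : ZMod 32) * (-A) + ∑ m ∈ Ico 2 n, g m := by
        rw [hsplit, Finset.sum_insert hd1, Finset.sum_insert hd2, hEZ0, hEZ1, hmid]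
        ring
      -- choose 2 evaluation
      have hC2 : (2*n).choose 2 = n*(2*n-1) := by
        rw [Nat.choose_two_right, show 2*n*(2*n-1) = 2*(n*(2*n-1)) by ring]
        exact Nat.mul_div_cancel_left _ (by norm_num)
      have hC2c : ((2*n).choose 2 : ZMod 32) = M * (2*M - 1) := by
        rw [hC2]
        have : ((n*(2*n-1) : ℕ) : ZMod 32) = (n:ZMod 32) * ((2*n-1 : ℕ) : ZMod 32) := by push_cast; ring
        rw [this, Nat.cast_sub (by omega : 1 ≤ 2*n)]
        push_cast
        rfl
      -- values of g at 0, 1, n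
      have hg0v : g 0 = A*B := by simp [hg, hG]
      have hg1v : g 1 = M*(2*M-1) * (A*B + 22*A^3 + 8*A^2) := by
        simp only [hg, hG, show (2:ℕ)*1 = 2 from rfl, hC2c]
        push_cast
        ring
      have hgnv : g n = A*B + 8*A^3*M^3 + 12*A^3*M^2 + (2*A^3+8*A^2)*M := by
        simp only [hg, hG, Nat.choose_self]
        push_cast
        ring
      rw [h1, hEZsum, hIco, hC2c, hg0v, hg1v, hgnv]
      have hf := final_id A M
      linear_combination hf

theorem stmt17 (a : ℤ) (ha : a ≠ 0) (n : ℕ) (hn : 2 ≤ n) :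
    ∀ b : ℤ, (2 * a - 1) * b ≡ 1 [ZMOD 32] →
      EZ a (2 * n) ≡ a * b + 8 * a ^ 3 * n ^ 3 + 12 * a ^ 3 * n ^ 2 +
        (2 * a ^ 3 + 8 * a ^ 2) * n [ZMOD 32] := by
  intro b hb
  have hbc : (((2*a-1)*b : ℤ) : ZMod 32) = ((1:ℤ) : ZMod 32) :=
    (ZMod.intCast_eq_intCast_iff _ _ _).mpr hb
  have hb' : (2*(a:ZMod 32) - 1) * (b:ZMod 32) = 1 := by push_cast at hbc; exact hbc
  have hu := hB (a:ZMod 32)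
  have hBeq : (b:ZMod 32) = (2*(a:ZMod 32)-1)^7 := by
    calc (b:ZMod 32) = ((2*(a:ZMod 32)-1)*(2*(a:ZMod 32)-1)^7) * (b:ZMod 32) := by rw [hu]; ring
    _ = (2*(a:ZMod 32)-1)^7 * ((2*(a:ZMod 32)-1) * (b:ZMod 32)) := by ring
    _ = (2*(a:ZMod 32)-1)^7 := by rw [hb']; ring
  apply (ZMod.intCast_eq_intCast_iff _ _ _).mp
  push_cast
  rw [main_cong a n hn, hBeq]
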